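/- arXiv:1111.0731 — 2 statements merged into one kernel-verified Lean document; each statement's English description precedes it below -/
import Mathlib

section
/- Let (X,x₀) be a pointed topological space and n ≥ 1. For a sequence of continuous pointed maps f_k : (S_k^n, θ) → (X, x₀) (one for each k ∈ ℕ), the map f : (ℍ^n, θ) → (X, x₀) defined by f|_{S_k^n} = f_k is continuous if and only if the family {f_k}_{k∈ℕ} is null-convergent. -/
open scoped unitInterval Topology Topology.Homotopy

noncomputable section

namespace HG

/-- The `k`-th `n`-sphere `Sₖⁿ` (of radius `1/(k+1)`) of the `n`-dimensional Hawaiian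
earring, as a subset of `ℝ^{n+1}`. -/
def sphereSet (n k : ℕ) : Set (EuclideanSpace ℝ (Fin (n+1))) :=
  {r | (r 0 - 1/(k+1))^2 + ∑ i ∈ Finset.univ.erase (0 : Fin (n+1)), (r i)^2 = (1/(k+1))^2}

/-- The `n`-dimensional Hawaiian earring
`ℍⁿ = {r ∈ ℝ^{n+1} | (r₀ - 1/k)² + ∑_{i=1}^n rᵢ² = (1/k)², some k ∈ ℕ}`. -/
def hawaiianSet (n : ℕ) : Set (EuclideanSpace ℝ (Fin (n+1))) :=
  ⋃ k : ℕ, sphereSet n k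

/-- The base point `θ = (0, …, 0)` of the Hawaiian earring. -/
def theta (n : ℕ) : EuclideanSpace ℝ (Fin (n+1)) := 0

theorem theta_mem_sphereSet (n k : ℕ) : theta n ∈ sphereSet n k := by
  simp [sphereSet, theta]

theorem sphereSet_subset (n k : ℕ) : sphereSet n k ⊆ hawaiianSet n :=
  Set.subset_iUnion (sphereSet n) k

/-- `θ` as a point of the subspace `ℍⁿ`. -/
def thetaPt (n : ℕ) : ↥(hawaiianSet n) :=
  ⟨theta n, sphereSet_subset n 0 (theta_mem_sphereSet n 0)⟩

/-- The "tail" `⋁̃_{k ≥ m} Sₖⁿ` of the Hawaiian earring: the union of all the spheres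
`Sₖⁿ` with index `k ≥ m`, as a subspace of `ℍⁿ`. -/
def tailSet (n m : ℕ) : Set (EuclideanSpace ℝ (Fin (n+1))) :=
  ⋃ k : ℕ, ⋃ (_ : m ≤ k), sphereSet n k

theorem tailSet_subset (n m : ℕ) : tailSet n m ⊆ hawaiianSet n := by
  intro r hr
  rcases Set.mem_iUnion.mp hr with ⟨k, hk⟩
  rcases Set.mem_iUnion.mp hk with ⟨-, h⟩
  exact sphereSet_subset n k h

theorem theta_mem_tailSet (n m : ℕ) : theta n ∈ tailSet n m :=
  Set.mem_iUnion.mpr ⟨m, Set.mem_iUnion.mpr ⟨le_rfl, theta_mem_sphereSet n m⟩⟩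


lemma sum_sq_eq (n k : ℕ) {r : EuclideanSpace ℝ (Fin (n+1))}
    (hr : r ∈ sphereSet n k) :
    ∑ i, (r i)^2 = 2*(1/(k+1))*(r 0) := by
  simp only [sphereSet, Set.mem_setOf_eq] at hr
  have hsum : ∑ i, (r i)^2 = (r 0)^2 + ∑ i ∈ Finset.univ.erase (0 : Fin (n+1)), (r i)^2 :=
    (Finset.add_sum_erase _ _ (Finset.mem_univ 0)).symm
  rw [hsum]; nlinarith [hr]

lemma r0_bounds (n k : ℕ) {r : EuclideanSpace ℝ (Fin (n+1))}
    (hr : r ∈ sphereSet n k) : 0 ≤ r 0 ∧ r 0 ≤ 2*(1/(k+1)) := by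
  have hc : (0:ℝ) < 1/(k+1) := by positivity
  have h := sum_sq_eq n k hr
  have hnn : (0:ℝ) ≤ ∑ i, (r i)^2 := Finset.sum_nonneg fun i _ => sq_nonneg _
  have hsum : ∑ i, (r i)^2 = (r 0)^2 + ∑ i ∈ Finset.univ.erase (0 : Fin (n+1)), (r i)^2 :=
    (Finset.add_sum_erase _ _ (Finset.mem_univ 0)).symm
  have hsq : (r 0)^2 ≤ ∑ i, (r i)^2 := by
    rw [hsum]
    have : (0:ℝ) ≤ ∑ i ∈ Finset.univ.erase (0 : Fin (n+1)), (r i)^2 :=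
      Finset.sum_nonneg fun i _ => sq_nonneg _
    linarith
  have h0 : 0 ≤ r 0 := by nlinarith [hsq, h, hc]
  refine ⟨h0, ?_⟩
  by_contra hlt
  push_neg at hlt
  have hr0pos : 0 < r 0 := lt_trans (by positivity) hlt
  nlinarith [hsq, h, mul_pos (sub_pos.mpr hlt) hr0pos]

lemma norm_le (n k : ℕ) {r : EuclideanSpace ℝ (Fin (n+1))}
    (hr : r ∈ sphereSet n k) : ‖r‖ ≤ 2*(1/(k+1)) := by
  have hc : (0:ℝ) < 1/(k+1) := by positivity
  obtain ⟨h0, h2⟩ := r0_bounds n k hr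
  have h := sum_sq_eq n k hr
  have hnorm : ‖r‖ = Real.sqrt (∑ i, (r i)^2) := by
    rw [EuclideanSpace.norm_eq]
    congr 1
    refine Finset.sum_congr rfl fun i _ => ?_
    rw [Real.norm_eq_abs, sq_abs]
  rw [hnorm, h]
  calc Real.sqrt (2*(1/(k+1))*(r 0)) ≤ Real.sqrt ((2*(1/(k+1)))^2) := by
        apply Real.sqrt_le_sqrt
        nlinarith [mul_le_mul_of_nonneg_left h2 (by positivity : (0:ℝ) ≤ 2*(1/((k:ℝ)+1)))]
    _ = 2*(1/(k+1)) := Real.sqrt_sq (by positivity)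

lemma eq_zero_of_mem_two (n j k : ℕ) (hjk : j ≠ k) {r : EuclideanSpace ℝ (Fin (n+1))}
    (hj : r ∈ sphereSet n j) (hk : r ∈ sphereSet n k) : r = 0 := by
  have hcj : (0:ℝ) < 1/(j+1) := by positivity
  have hck : (0:ℝ) < 1/(k+1) := by positivity
  have hne : (1:ℝ)/(j+1) ≠ 1/(k+1) := by
    intro h
    rw [div_eq_div_iff (by positivity) (by positivity)] at h
    apply hjk
    have : (j:ℝ) = k := by linarith
    exact_mod_cast this
  have h1 := sum_sq_eq n j hj
  have h2 := sum_sq_eq n k hk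
  have hr0 : r 0 = 0 := by
    by_contra h
    apply hne
    have := h1.symm.trans h2
    field_simp at this ⊢
    nlinarith [this]
  have hsum : ∑ i, (r i)^2 = 0 := by rw [h1, hr0]; ring
  have hall : ∀ i ∈ Finset.univ, (r i)^2 = 0 :=
    (Finset.sum_eq_zero_iff_of_nonneg fun i _ => sq_nonneg _).mp hsum
  ext i
  have := hall i (Finset.mem_univ i)
  exact pow_eq_zero_iff (by norm_num) |>.mp this

lemma isClosed_sphereSet (n k : ℕ) : IsClosed (sphereSet n k) := by
  have : sphereSet n k =
      (fun r : EuclideanSpace ℝ (Fin (n+1)) =>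
        (r 0 - 1/(k+1))^2 + ∑ i ∈ Finset.univ.erase (0 : Fin (n+1)), (r i)^2) ⁻¹'
        {(1/(k+1):ℝ)^2} := rfl
  rw [this]
  apply IsClosed.preimage _ isClosed_singleton
  apply Continuous.add
  · exact (((EuclideanSpace.proj (0 : Fin (n+1))).continuous).sub continuous_const).pow 2
  · exact continuous_finset_sum _ fun i _ => ((EuclideanSpace.proj i).continuous).pow 2

/-- For a sequence of continuous pointed maps `fₖ : (Sₖⁿ, θ) → (X, x₀)`,
the map `f : (ℍⁿ, θ) → (X, x₀)` defined by `f|_{Sₖⁿ} = fₖ` is continuous if and only if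
the family `{fₖ}` is null-convergent. -/
theorem hawaiian_glued_continuous_iff_nullConvergent
    (n : ℕ) (hn : 1 ≤ n) (X : Type*) [TopologicalSpace X] (x₀ : X)
    (f : ↥(hawaiianSet n) → X) (hfθ : f (thetaPt n) = x₀)
    (fk : ∀ k : ℕ, ↥(sphereSet n k) → X)
    (hcont : ∀ k, Continuous (fk k))
    (hpt : ∀ k, fk k ⟨theta n, theta_mem_sphereSet n k⟩ = x₀)
    (hres : ∀ (k : ℕ) (r : EuclideanSpace ℝ (Fin (n+1))) (hr : r ∈ sphereSet n k),
      f ⟨r, sphereSet_subset n k hr⟩ = fk k ⟨r, hr⟩) :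
    Continuous f ↔
      ∀ U : Set X, IsOpen U → x₀ ∈ U → {k : ℕ | ¬ Set.range (fk k) ⊆ U}.Finite := by
  constructor
  · -- continuity implies null-convergence
    intro hf U hU hxU
    have hmem : f ⁻¹' U ∈ 𝓝 (thetaPt n) :=
      hf.continuousAt.preimage_mem_nhds (by rw [hfθ]; exact hU.mem_nhds hxU)
    rw [nhds_subtype_eq_comap, Filter.mem_comap] at hmem
    obtain ⟨W, hW, hWsub⟩ := hmem
    have hW0 : W ∈ 𝓝 (0 : EuclideanSpace ℝ (Fin (n+1))) := hW
    obtain ⟨ε, hε, hball⟩ := Metric.mem_nhds_iff.mp hW0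
    refine Set.Finite.subset (Set.finite_Iic ⌈2/ε⌉₊) ?_
    intro k hk
    simp only [Set.mem_setOf_eq] at hk
    by_contra hk'
    simp only [Set.mem_Iic, not_le] at hk'
    apply hk
    rintro x ⟨s, rfl⟩
    have hnorm : ‖(s : EuclideanSpace ℝ (Fin (n+1)))‖ ≤ 2*(1/(k+1)) := norm_le n k s.2
    have hkR : (2:ℝ)/ε < (k:ℝ)+1 := by
      have h1 : (2:ℝ)/ε ≤ ⌈2/ε⌉₊ := Nat.le_ceil _
      have h2 : ((⌈2/ε⌉₊:ℕ):ℝ) < k := by exact_mod_cast hk'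
      linarith
    have hlt : 2*(1/((k:ℝ)+1)) < ε := by
      have hkpos : (0:ℝ) < (k:ℝ)+1 := by positivity
      rw [div_lt_iff₀ hε] at hkR
      rw [mul_one_div, div_lt_iff₀ hkpos]
      linarith
    have hsball : (s : EuclideanSpace ℝ (Fin (n+1))) ∈ Metric.ball 0 ε :=
      mem_ball_zero_iff.mpr (lt_of_le_of_lt hnorm hlt)
    have hfU : f ⟨s.val, sphereSet_subset n k s.2⟩ ∈ U :=
      hWsub (show ((⟨s.val, sphereSet_subset n k s.2⟩ : ↥(hawaiianSet n)) : EuclideanSpace ℝ (Fin (n+1))) ∈ W from hball hsball)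
    rw [hres k s.val s.2] at hfU
    exact hfU
  · -- null-convergence implies continuity
    intro hnull
    rw [continuous_iff_continuousAt]
    intro p
    rw [continuousAt_def]
    intro U hU
    obtain ⟨V, hVU, hVopen, hfpV⟩ := mem_nhds_iff.mp hU
    suffices h : f ⁻¹' V ∈ 𝓝 p from
      Filter.mem_of_superset h (Set.preimage_mono hVU)
    rw [nhds_subtype_eq_comap, Filter.mem_comap]
    by_cases hp : (p : EuclideanSpace ℝ (Fin (n+1))) = 0
    · -- at the base point
      have hpe : p = thetaPt n := Subtype.ext hp
      have hx₀V : x₀ ∈ V := by rw [hpe, hfθ] at hfpV; exact hfpV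
      have hB : {k : ℕ | ¬ Set.range (fk k) ⊆ V}.Finite := hnull V hVopen hx₀V
      have hWk : ∀ k : ℕ, ∃ W ∈ 𝓝 (0 : EuclideanSpace ℝ (Fin (n+1))),
          ∀ s : ↥(sphereSet n k), (s : EuclideanSpace ℝ (Fin (n+1))) ∈ W → fk k s ∈ V := by
        intro k
        have hmem : (fk k) ⁻¹' V ∈ 𝓝 (⟨theta n, theta_mem_sphereSet n k⟩ : ↥(sphereSet n k)) :=
          ((hcont k).continuousAt).preimage_mem_nhds
            (hVopen.mem_nhds (by rw [hpt k]; exact hx₀V))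
        rw [nhds_subtype_eq_comap, Filter.mem_comap] at hmem
        obtain ⟨W, hWm, hsub⟩ := hmem
        exact ⟨W, hWm, fun s hs => hsub hs⟩
      choose W hWmem hWprop using hWk
      refine ⟨⋂ k ∈ hB.toFinset, W k, ?_, ?_⟩
      · rw [hp]
        exact (Filter.biInter_finset_mem _).mpr fun k _ => hWmem k
      · intro r hr
        obtain ⟨k, hk⟩ := Set.mem_iUnion.mp r.2
        have heq : f r = fk k ⟨r.val, hk⟩ := hres k r.val hk
        show f r ∈ V
        rw [heq]
        by_cases hkB : k ∈ hB.toFinset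
        · have hrW : r.val ∈ W k := Set.mem_iInter₂.mp hr k hkB
          exact hWprop k ⟨r.val, hk⟩ hrW
        · have hgood : Set.range (fk k) ⊆ V := by
            rw [Set.Finite.mem_toFinset] at hkB
            simpa using not_not.mp hkB
          exact hgood ⟨_, rfl⟩
    · -- away from the base point
      obtain ⟨k, hk⟩ := Set.mem_iUnion.mp p.2
      have hpnorm : 0 < ‖(p : EuclideanSpace ℝ (Fin (n+1)))‖ := norm_pos_iff.mpr hp
      set q : EuclideanSpace ℝ (Fin (n+1)) := p.val with hq
      set N : ℕ := ⌈4/‖q‖⌉₊ + 1 with hN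
      have htail : ∀ j : ℕ, N ≤ j → ∀ r ∈ sphereSet n j, ‖r‖ ≤ ‖q‖/2 := by
        intro j hj r hr
        have h1 : ‖r‖ ≤ 2*(1/((j:ℝ)+1)) := norm_le n j hr
        have h2 : (4:ℝ)/‖q‖ ≤ (j:ℝ) := by
          calc (4:ℝ)/‖q‖ ≤ (⌈4/‖q‖⌉₊ : ℝ) := Nat.le_ceil _
            _ ≤ j := by exact_mod_cast le_trans (Nat.le_succ _) hj
        have hj1 : (0:ℝ) < (j:ℝ)+1 := by positivity
        have h4 : (4:ℝ) ≤ (j:ℝ) * ‖q‖ := (div_le_iff₀ hpnorm).mp h2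
        have h5 : 2*(1/((j:ℝ)+1)) ≤ ‖q‖/2 := by
          rw [mul_one_div, div_le_div_iff₀ hj1 (by norm_num : (0:ℝ) < 2)]
          nlinarith [h4, hpnorm]
        linarith
      have hkN : k < N := by
        by_contra hge
        push_neg at hge
        have := htail k hge q hk
        linarith
      set C : Set (EuclideanSpace ℝ (Fin (n+1))) :=
        ⋃ j ∈ {j : ℕ | j < N ∧ j ≠ k}, sphereSet n j with hC
      have hCclosed : IsClosed C := by
        apply Set.Finite.isClosed_biUnion
        · exact (Set.finite_Iio N).subset fun j hj => hj.1
        · intro j _; exact isClosed_sphereSet n j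
      have hqC : q ∉ C := by
        intro hmem
        obtain ⟨j, hj, hjq⟩ := Set.mem_iUnion₂.mp hmem
        exact hp (eq_zero_of_mem_two n j k hj.2 hjq hk)
      set V' : Set (EuclideanSpace ℝ (Fin (n+1))) :=
        {r | ‖q‖/2 < ‖r‖} ∩ Cᶜ with hV'
      have hV'open : IsOpen V' := by
        apply IsOpen.inter
        · exact isOpen_lt continuous_const continuous_norm
        · exact hCclosed.isOpen_compl
      have hqV' : q ∈ V' := ⟨(by linarith : ‖q‖/2 < ‖q‖), hqC⟩
      have hsub : ∀ r : EuclideanSpace ℝ (Fin (n+1)),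
          r ∈ hawaiianSet n → r ∈ V' → r ∈ sphereSet n k := by
        intro r hrH hrV'
        obtain ⟨j, hj⟩ := Set.mem_iUnion.mp hrH
        rcases eq_or_ne j k with rfl | hjk
        · exact hj
        · by_cases hjN : j < N
          · exact absurd (Set.mem_iUnion₂.mpr ⟨j, ⟨hjN, hjk⟩, hj⟩) hrV'.2
          · push_neg at hjN
            have := htail j hjN r hj
            exact absurd hrV'.1 (not_lt.mpr this)
      have hfkc : (fk k) ⁻¹' V ∈ 𝓝 (⟨q, hk⟩ : ↥(sphereSet n k)) := by
        apply ((hcont k).continuousAt).preimage_mem_nhds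
        apply hVopen.mem_nhds
        have heq : f p = fk k ⟨q, hk⟩ := hres k q hk
        rw [← heq]
        exact hfpV
      rw [nhds_subtype_eq_comap, Filter.mem_comap] at hfkc
      obtain ⟨Wf, hWfmem, hWfsub⟩ := hfkc
      refine ⟨Wf ∩ V', Filter.inter_mem hWfmem (hV'open.mem_nhds hqV'), ?_⟩
      rintro r ⟨hrW, hrV'⟩
      have hrk : r.val ∈ sphereSet n k := hsub r.val r.2 hrV'
      show f r ∈ V
      rw [hres k r.val hrk]
      exact hWfsub (show ((⟨r.val, hrk⟩ : ↥(sphereSet n k)) : EuclideanSpace ℝ (Fin (n+1))) ∈ Wf from hrW)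


end HG
end
end

section
/- Let (X,x₀) be a pointed topological space and n ≥ 1. Let {f_k, f′_k : (S_k^n, θ) → (X, x₀)}_{k∈ℕ} be two sequences of continuous pointed maps such that for each k there is a homotopy H_k : S_k^n × I → X relative to the base point θ from f_k to f′_k, and the family {H_k}_{k∈ℕ} is null-convergent. Then the map H : ℍ^n × I → X defined by H|_{S_k^n × I} = H_k is a homotopy relative to {θ} from f to f′, where f|_{S_k^n} = f_k and f′|_{S_k^n} = f′_k. -/
open scoped unitInterval Topology Topology.Homotopy

noncomputable section

namespace HG

lemma sphere_isClosed (n j : ℕ) : IsClosed (sphereSet n j) := by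
  have hc : Continuous (fun r : EuclideanSpace ℝ (Fin (n+1)) =>
      (r 0 - 1/(j+1))^2 + ∑ i ∈ Finset.univ.erase (0 : Fin (n+1)), (r i)^2) := by
    fun_prop
  exact isClosed_eq hc continuous_const

lemma sphere_norm_le (n j : ℕ) {r : EuclideanSpace ℝ (Fin (n+1))} (hr : r ∈ sphereSet n j) :
    ‖r‖ ≤ 2/(j+1) := by
  have hj : (0:ℝ) < (j:ℝ)+1 := by positivity
  set c : ℝ := 1/((j:ℝ)+1) with hc
  have hc0 : 0 < c := by positivity
  have h : (r 0 - c)^2 + ∑ i ∈ Finset.univ.erase (0 : Fin (n+1)), (r i)^2 = c^2 := hr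
  have hQ : (0:ℝ) ≤ ∑ i ∈ Finset.univ.erase (0 : Fin (n+1)), (r i)^2 :=
    Finset.sum_nonneg fun i _ => sq_nonneg _
  have hr0 : 0 ≤ r 0 ∧ r 0 ≤ 2*c := by constructor <;> nlinarith [sq_nonneg (r 0 - c)]
  have hnorm : ‖r‖ = Real.sqrt (∑ i, (r i)^2) := by
    rw [EuclideanSpace.norm_eq]
    congr 1
    exact Finset.sum_congr rfl fun i _ => by rw [Real.norm_eq_abs, sq_abs]
  have hsum : (∑ i, (r i)^2) = (r 0)^2 + ∑ i ∈ Finset.univ.erase (0 : Fin (n+1)), (r i)^2 :=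
    (Finset.add_sum_erase _ _ (Finset.mem_univ 0)).symm
  have hle : (∑ i, (r i)^2) ≤ (2*c)^2 := by rw [hsum]; nlinarith
  calc ‖r‖ = Real.sqrt (∑ i, (r i)^2) := hnorm
    _ ≤ Real.sqrt ((2*c)^2) := Real.sqrt_le_sqrt hle
    _ = 2*c := Real.sqrt_sq (by positivity)
    _ = 2/((j:ℝ)+1) := by rw [hc]; ring

lemma sphere_inter (n j k : ℕ) (hjk : j ≠ k) {r : EuclideanSpace ℝ (Fin (n+1))}
    (hj : r ∈ sphereSet n j) (hk : r ∈ sphereSet n k) : r = theta n := by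
  set a : ℝ := 1/((j:ℝ)+1)
  set b : ℝ := 1/((k:ℝ)+1)
  have hab : a ≠ b := by
    simp only [a, b, one_div]
    intro h
    have := inv_injective h
    exact hjk (by exact_mod_cast (by linarith : ((j:ℝ)) = k))
  have h1 : (r 0 - a)^2 + ∑ i ∈ Finset.univ.erase (0 : Fin (n+1)), (r i)^2 = a^2 := hj
  have h2 : (r 0 - b)^2 + ∑ i ∈ Finset.univ.erase (0 : Fin (n+1)), (r i)^2 = b^2 := hk
  have hr0 : r 0 = 0 := by
    have : r 0 * (a - b) = 0 := by nlinarith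
    rcases mul_eq_zero.mp this with h | h
    · exact h
    · exact absurd (by linarith : a = b) hab
  have hQ : ∑ i ∈ Finset.univ.erase (0 : Fin (n+1)), (r i)^2 = 0 := by
    have h1' := h1; rw [hr0] at h1'; nlinarith [h1']
  have hall : ∀ i ∈ Finset.univ.erase (0 : Fin (n+1)), (r i)^2 = 0 :=
    (Finset.sum_eq_zero_iff_of_nonneg fun i _ => sq_nonneg _).mp hQ
  ext i
  by_cases hi : i = 0
  · subst hi; simpa [theta] using hr0
  · have := hall i (Finset.mem_erase.mpr ⟨hi, Finset.mem_univ i⟩)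
    simpa [theta] using (pow_eq_zero_iff two_ne_zero).mp this


lemma exists_eps (n k : ℕ) (p : EuclideanSpace ℝ (Fin (n+1))) (hp : p ∈ sphereSet n k)
    (hp0 : p ≠ theta n) :
    ∃ ε > 0, ∀ r ∈ hawaiianSet n, dist r p < ε → r ∈ sphereSet n k := by
  have hd : 0 < ‖p‖ := norm_pos_iff.mpr (by simpa [theta] using hp0)
  obtain ⟨N, hN⟩ : ∃ N : ℕ, 2/((N:ℝ)+1) < ‖p‖/2 := by
    obtain ⟨N, hN⟩ := exists_nat_gt (4/‖p‖)
    refine ⟨N, ?_⟩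
    rw [div_lt_iff₀ hd] at hN
    rw [div_lt_div_iff₀ (by positivity) two_pos]
    nlinarith
  set F : Finset ℕ := (Finset.range N).erase k with hF
  set ε : ℝ := min (‖p‖/2)
    (if h : F.Nonempty then F.inf' h (fun j => Metric.infDist p (sphereSet n j)) else 1) with hε
  have hpos : 0 < ε := by
    apply lt_min (by positivity)
    split
    · next h =>
      rw [Finset.lt_inf'_iff]
      intro j hj
      have hjk : j ≠ k := (Finset.mem_erase.mp hj).1
      have hpj : p ∉ sphereSet n j := fun hmem => hp0 (sphere_inter n j k hjk hmem hp)
      exact (IsClosed.notMem_iff_infDist_pos (sphere_isClosed n j)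
        ⟨theta n, theta_mem_sphereSet n j⟩).mp hpj
    · exact one_pos
  refine ⟨ε, hpos, fun r hr hdist => ?_⟩
  obtain ⟨j, hj⟩ := Set.mem_iUnion.mp hr
  by_cases hjk : j = k
  · exact hjk ▸ hj
  by_cases hjN : j < N
  · exfalso
    have hjF : j ∈ F := Finset.mem_erase.mpr ⟨hjk, Finset.mem_range.mpr hjN⟩
    have h1 : ε ≤ Metric.infDist p (sphereSet n j) := by
      refine le_trans (min_le_right _ _) ?_
      rw [dif_pos ⟨j, hjF⟩]
      exact Finset.inf'_le _ hjF
    have h2 : Metric.infDist p (sphereSet n j) ≤ dist p r := Metric.infDist_le_dist_of_mem hj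
    rw [dist_comm] at h2
    linarith
  · exfalso
    have hNj : (N:ℝ) ≤ j := by exact_mod_cast Nat.le_of_not_lt hjN
    have h1 : ‖r‖ ≤ 2/((j:ℝ)+1) := sphere_norm_le n j hj
    have h2 : 2/((j:ℝ)+1) ≤ 2/((N:ℝ)+1) := by gcongr
    have h3 : ‖p‖ - ‖r‖ ≤ ‖p - r‖ := norm_sub_norm_le p r
    have h4 : dist r p = ‖p - r‖ := by rw [dist_eq_norm, norm_sub_rev]
    have h5 : ε ≤ ‖p‖/2 := min_le_left _ _
    linarith

lemma sphere_contOn (n k : ℕ) (X : Type*) [TopologicalSpace X]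
    (Hk : ↥(sphereSet n k) × I → X) (hHcont : Continuous Hk)
    (H : ↥(hawaiianSet n) × I → X)
    (hHres : ∀ (r : EuclideanSpace ℝ (Fin (n+1))) (hr : r ∈ sphereSet n k) (t : I),
      H (⟨r, sphereSet_subset n k hr⟩, t) = Hk (⟨r, hr⟩, t)) :
    ContinuousOn H ((Subtype.val ⁻¹' sphereSet n k) ×ˢ (Set.univ : Set I)) := by
  rw [continuousOn_iff_continuous_restrict]
  have heq : Set.restrict ((Subtype.val ⁻¹' sphereSet n k) ×ˢ (Set.univ : Set I)) H =
      fun x : ↥((Subtype.val ⁻¹' sphereSet n k) ×ˢ (Set.univ : Set I)) =>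
      Hk (⟨x.1.1.1, x.2.1⟩, x.1.2) := by
    funext x
    obtain ⟨⟨⟨qv, qmem⟩, t⟩, hq, -⟩ := x
    exact hHres qv hq t
  change Continuous (Set.restrict ((Subtype.val ⁻¹' sphereSet n k) ×ˢ (Set.univ : Set I)) H)
  rw [heq]
  exact hHcont.comp (by fun_prop)


/-- If `{fₖ}, {f'ₖ}` are sequences of continuous pointed maps
`(Sₖⁿ, θ) → (X, x₀)` and `Hₖ : Sₖⁿ × I → X` are homotopies rel `{θ}` from `fₖ` to `f'ₖ`
forming a null-convergent family, then the glued map `H : ℍⁿ × I → X` with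
`H|_{Sₖⁿ × I} = Hₖ` is a homotopy rel `{θ}` from `f` to `f'`, where `f|_{Sₖⁿ} = fₖ`
and `f'|_{Sₖⁿ} = f'ₖ`. -/
theorem hawaiian_glued_homotopy
    (n : ℕ) (hn : 1 ≤ n) (X : Type*) [TopologicalSpace X] (x₀ : X)
    (f f' : ↥(hawaiianSet n) → X)
    (fk f'k : ∀ k : ℕ, ↥(sphereSet n k) → X)
    (hcont : ∀ k, Continuous (fk k)) (hcont' : ∀ k, Continuous (f'k k))
    (hpt : ∀ k, fk k ⟨theta n, theta_mem_sphereSet n k⟩ = x₀)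
    (hpt' : ∀ k, f'k k ⟨theta n, theta_mem_sphereSet n k⟩ = x₀)
    (hres : ∀ (k : ℕ) (r : EuclideanSpace ℝ (Fin (n+1))) (hr : r ∈ sphereSet n k),
      f ⟨r, sphereSet_subset n k hr⟩ = fk k ⟨r, hr⟩)
    (hres' : ∀ (k : ℕ) (r : EuclideanSpace ℝ (Fin (n+1))) (hr : r ∈ sphereSet n k),
      f' ⟨r, sphereSet_subset n k hr⟩ = f'k k ⟨r, hr⟩)
    (Hk : ∀ k : ℕ, ↥(sphereSet n k) × I → X)
    (hHcont : ∀ k, Continuous (Hk k))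
    (hH0 : ∀ k s, Hk k (s, 0) = fk k s)
    (hH1 : ∀ k s, Hk k (s, 1) = f'k k s)
    (hHrel : ∀ k (t : I), Hk k (⟨theta n, theta_mem_sphereSet n k⟩, t) = x₀)
    (hHnull : ∀ U : Set X, IsOpen U → x₀ ∈ U →
      {k : ℕ | ¬ Set.range (Hk k) ⊆ U}.Finite)
    (H : ↥(hawaiianSet n) × I → X)
    (hHres : ∀ (k : ℕ) (r : EuclideanSpace ℝ (Fin (n+1))) (hr : r ∈ sphereSet n k) (t : I),
      H (⟨r, sphereSet_subset n k hr⟩, t) = Hk k (⟨r, hr⟩, t)) :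
    Continuous H ∧ (∀ s, H (s, 0) = f s) ∧ (∀ s, H (s, 1) = f' s) ∧
      (∀ t : I, H (thetaPt n, t) = x₀) := by
  refine ⟨?_, ?_, ?_, ?_⟩
  · rw [continuous_iff_continuousAt]
    rintro ⟨p, t⟩
    by_cases hp : (p : EuclideanSpace ℝ (Fin (n+1))) = theta n
    · -- base point case
      have hval : H (p, t) = x₀ := by
        have hpe : p = (⟨theta n, sphereSet_subset n 0 (theta_mem_sphereSet n 0)⟩ :
            ↥(hawaiianSet n)) := Subtype.ext hp
        rw [hpe, hHres 0 (theta n) (theta_mem_sphereSet n 0) t, hHrel 0 t]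
      rw [ContinuousAt, hval, tendsto_nhds]
      intro U hUopen hU
      have hfin := hHnull U hUopen hU
      have tube : ∀ k : ℕ, ∃ O : Set (EuclideanSpace ℝ (Fin (n+1))), IsOpen O ∧ theta n ∈ O ∧
          ∀ (r : EuclideanSpace ℝ (Fin (n+1))) (hr : r ∈ sphereSet n k) (s : I),
            r ∈ O → Hk k (⟨r, hr⟩, s) ∈ U := by
        intro k
        have hA : IsOpen ((Hk k) ⁻¹' U) := hUopen.preimage (hHcont k)
        have hsub : ({(⟨theta n, theta_mem_sphereSet n k⟩ : ↥(sphereSet n k))} : Set _) ×ˢ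
            (Set.univ : Set I) ⊆ (Hk k) ⁻¹' U := by
          rintro ⟨a, s⟩ ⟨ha, -⟩
          simp only [Set.mem_singleton_iff] at ha
          subst ha
          simpa [Set.mem_preimage, hHrel k s] using hU
        obtain ⟨u, v, hu, hv, hθu, hIv, huv⟩ :=
          generalized_tube_lemma isCompact_singleton isCompact_univ hA hsub
        obtain ⟨O, hO, hOu⟩ := isOpen_induced_iff.mp hu
        refine ⟨O, hO, ?_, ?_⟩
        · have h1 : (⟨theta n, theta_mem_sphereSet n k⟩ : ↥(sphereSet n k)) ∈ u := hθu rfl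
          rw [← hOu] at h1
          exact h1
        · intro r hr s hrO
          have h1 : (⟨r, hr⟩ : ↥(sphereSet n k)) ∈ u := by rw [← hOu]; exact hrO
          exact huv ⟨h1, hIv (Set.mem_univ s)⟩
      choose O hOopen hOθ hOU using tube
      set F : Set ℕ := {k : ℕ | ¬ Set.range (Hk k) ⊆ U} with hF
      set W : Set ↥(hawaiianSet n) :=
        Subtype.val ⁻¹' (⋂ k ∈ F, O k) with hW
      have hWopen : IsOpen W :=
        (Set.Finite.isOpen_biInter hfin fun k _ => hOopen k).preimage continuous_subtype_val
      have hpW : p ∈ W := by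
        simp only [hW, Set.mem_preimage]
        exact Set.mem_iInter₂.mpr fun k _ => hp ▸ hOθ k
      refine Filter.mem_of_superset
        (IsOpen.mem_nhds (hWopen.prod isOpen_univ) ⟨hpW, trivial⟩) ?_
      rintro ⟨q, s⟩ ⟨hqW, -⟩
      obtain ⟨k, hk⟩ := Set.mem_iUnion.mp q.2
      obtain ⟨qv, qmem⟩ := q
      simp only [Set.mem_preimage]
      have heq : H (⟨qv, qmem⟩, s) = Hk k (⟨qv, hk⟩, s) := hHres k qv hk s
      rw [heq]
      by_cases hkF : k ∈ F
      · exact hOU k qv hk s (Set.mem_iInter₂.mp hqW k hkF)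
      · exact (not_not.mp hkF) ⟨_, rfl⟩
    · obtain ⟨k, hk⟩ := Set.mem_iUnion.mp p.2
      obtain ⟨ε, hε, hball⟩ := exists_eps n k p.1 hk hp
      have hcontk := sphere_contOn n k X (Hk k) (hHcont k) H (hHres k)
      have hmono : ((Subtype.val ⁻¹' Metric.ball (p : EuclideanSpace ℝ (Fin (n+1))) ε :
          Set ↥(hawaiianSet n))) ×ˢ (Set.univ : Set I) ⊆
          (Subtype.val ⁻¹' sphereSet n k) ×ˢ (Set.univ : Set I) := by
        rintro ⟨q, s⟩ ⟨hq, -⟩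
        exact ⟨hball q.1 q.2 hq, trivial⟩
      refine (hcontk.mono hmono).continuousAt (IsOpen.mem_nhds ?_ ⟨Metric.mem_ball_self hε, trivial⟩)
      exact (Metric.isOpen_ball.preimage continuous_subtype_val).prod isOpen_univ
  · intro s
    obtain ⟨k, hk⟩ := Set.mem_iUnion.mp s.2
    obtain ⟨sv, smem⟩ := s
    have heq : H (⟨sv, smem⟩, 0) = Hk k (⟨sv, hk⟩, 0) := hHres k sv hk 0
    have heq2 : f (⟨sv, smem⟩ : ↥(hawaiianSet n)) = fk k ⟨sv, hk⟩ := hres k sv hk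
    rw [heq, hH0, heq2]
  · intro s
    obtain ⟨k, hk⟩ := Set.mem_iUnion.mp s.2
    obtain ⟨sv, smem⟩ := s
    have heq : H (⟨sv, smem⟩, 1) = Hk k (⟨sv, hk⟩, 1) := hHres k sv hk 1
    have heq2 : f' (⟨sv, smem⟩ : ↥(hawaiianSet n)) = f'k k ⟨sv, hk⟩ := hres' k sv hk
    rw [heq, hH1, heq2]
  · intro t
    have heq : H (thetaPt n, t) = Hk 0 (⟨theta n, theta_mem_sphereSet n 0⟩, t) :=
      hHres 0 (theta n) (theta_mem_sphereSet n 0) t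
    rw [heq, hHrel]


end HG
end
end
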